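/- Let n ≥ 2 and f ∈ C²(ℝ₊,ℝ). If for all real symmetric positive definite n×n matrices C and all symmetric n×n matrices H the inequality [f''(det C)·det(C) + f'(det C)]·⟨C⁻¹,H⟩² − f'(det C)·⟨HC⁻¹, C⁻¹H⟩ ≥ 0 holds, then f'(s) ≤ 0 for all s > 0. -/

import Mathlib

open Matrix

/-- The trace inner product `⟨A, B⟩ = tr (A Bᵀ)` on real `n × n` matrices. -/
noncomputable def tinner {n : ℕ} (A B : Matrix (Fin n) (Fin n) ℝ) : ℝ :=
  (A * Bᵀ).trace

theorem deriv_nonpos_of_cond (n : ℕ) (hn : 2 ≤ n) (f : ℝ → ℝ)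
    (hf : ContDiffOn ℝ 2 f (Set.Ioi 0))
    (h : ∀ C : Matrix (Fin n) (Fin n) ℝ, C.PosDef →
        ∀ H : Matrix (Fin n) (Fin n) ℝ, H.IsSymm →
          0 ≤ (deriv (deriv f) C.det * C.det + deriv f C.det) * (tinner C⁻¹ H) ^ 2 -
              deriv f C.det * tinner (H * C⁻¹) (C⁻¹ * H)) :
    ∀ s : ℝ, 0 < s → deriv f s ≤ 0 := by
  intro s hs
  set c : ℝ := s ^ ((n : ℝ)⁻¹) with hc
  have hc0 : 0 < c := Real.rpow_pos_of_pos hs _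
  have hcn : c ^ n = s := Real.rpow_inv_natCast_pow hs.le (by omega)
  set C : Matrix (Fin n) (Fin n) ℝ := c • 1 with hC
  have hCpd : C.PosDef := by
    constructor
    · rw [hC]
      simp [Matrix.IsHermitian, Matrix.conjTranspose_smul]
    · intro x hx
      rw [hC]
      exact (Matrix.PosDef.one.smul hc0).2 hx
  have hdet : C.det = s := by
    rw [hC, Matrix.det_smul, Matrix.det_one, mul_one, Fintype.card_fin, hcn]
  have hCinv : C⁻¹ = c⁻¹ • (1 : Matrix (Fin n) (Fin n) ℝ) := by
    apply Matrix.inv_eq_right_inv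
    rw [hC, smul_mul_assoc, mul_smul_comm, mul_one, smul_smul,
      mul_inv_cancel₀ hc0.ne', one_smul]
  set i0 : Fin n := ⟨0, by omega⟩ with hi0
  set i1 : Fin n := ⟨1, by omega⟩ with hi1
  have hne : i0 ≠ i1 := by simp [hi0, hi1, Fin.ext_iff]
  set v : Fin n → ℝ := fun i => (if i = i0 then 1 else 0) + (if i = i1 then -1 else 0)
    with hv
  set H : Matrix (Fin n) (Fin n) ℝ := Matrix.diagonal v with hH
  have hHs : H.IsSymm := Matrix.isSymm_diagonal v
  have htrH : H.trace = 0 := by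
    rw [hH, Matrix.trace_diagonal, hv]
    simp only [Finset.sum_add_distrib, Finset.sum_ite_eq', Finset.mem_univ, if_true]
    ring
  have t1 : tinner C⁻¹ H = 0 := by
    rw [tinner, hCinv, smul_mul_assoc, one_mul, Matrix.trace_smul,
      Matrix.trace_transpose, htrH, smul_zero]
  have htrHH : (H * H).trace = 2 := by
    rw [hH, Matrix.diagonal_mul_diagonal, Matrix.trace_diagonal]
    have : ∀ i : Fin n, v i * v i =
        (if i = i0 then 1 else 0) + (if i = i1 then 1 else 0) := by
      intro i
      by_cases h0 : i = i0
      · subst h0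
        simp [hv, hne]
      · by_cases h1 : i = i1
        · subst h1
          simp [hv, h0]
        · simp [hv, h0, h1]
    rw [Finset.sum_congr rfl fun i _ => this i]
    simp only [Finset.sum_add_distrib, Finset.sum_ite_eq', Finset.mem_univ, if_true]
    norm_num
  have e1 : H * C⁻¹ = c⁻¹ • H := by
    rw [hCinv, mul_smul_comm, mul_one]
  have e2 : C⁻¹ * H = c⁻¹ • H := by
    rw [hCinv, smul_mul_assoc, one_mul]
  have t2 : tinner (H * C⁻¹) (C⁻¹ * H) = c⁻¹ ^ 2 * 2 := by
    rw [tinner, e1, e2, Matrix.transpose_smul, Matrix.smul_mul, Matrix.mul_smul,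
      hHs.eq, Matrix.trace_smul, Matrix.trace_smul, htrHH]
    simp [sq]
    ring
  have key := h C hCpd H hHs
  rw [hdet, t1, t2] at key
  have hpos : (0 : ℝ) < c⁻¹ ^ 2 * 2 := by positivity
  nlinarith
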